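/- For the d-dimensional depolarizing channel D_λ with λ < 0, applied to a pure state |ψ⟩ with mean energy E = ⟨ψ|H|ψ⟩ where H has eigenvalues 0 = ε₁ ≤ ... ≤ ε_d = 1, the ergotropy of the output state equals |λ|·(1 − E). -/

import Mathlib

set_option maxHeartbeats 1000000

open Matrix BigOperators

/-- Mean energy `Tr[ρH]` (real part). -/
noncomputable def energy {ι : Type*} [Fintype ι] (ρ H : Matrix ι ι ℂ) : ℝ :=
  (Matrix.trace (ρ * H)).re

/-- Minimum of `Tr[UρU†H]` over all unitaries `U`. -/
noncomputable def minEnergy {ι : Type*} [Fintype ι] [DecidableEq ι]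
    (ρ H : Matrix ι ι ℂ) : ℝ :=
  sInf {x | ∃ U ∈ Matrix.unitaryGroup ι ℂ, x = energy (U * ρ * star U) H}

/-- Ergotropy `ℰ(ρ;H) = Tr[ρH] − min_U Tr[UρU†H]`. -/
noncomputable def ergotropy {ι : Type*} [Fintype ι] [DecidableEq ι]
    (ρ H : Matrix ι ι ℂ) : ℝ :=
  energy ρ H - minEnergy ρ H

/-- The `d`-dimensional depolarizing channel `D_λ(ρ) = λρ + (1−λ)Tr[ρ]·(I/d)`. -/
noncomputable def depol (d : ℕ) (l : ℝ) (ρ : Matrix (Fin d) (Fin d) ℂ) :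
    Matrix (Fin d) (Fin d) ℂ :=
  (l : ℂ) • ρ + (((1 - l) / d : ℝ) : ℂ) • Matrix.trace ρ • (1 : Matrix (Fin d) (Fin d) ℂ)

/-- The rank-one projector `|ψ⟩⟨ψ|` onto a pure state `ψ`. -/
noncomputable def pureProj (d : ℕ) (ψ : Fin d → ℂ) : Matrix (Fin d) (Fin d) ℂ :=
  Matrix.of fun i j => ψ i * star (ψ j)

/- ----------------- auxiliary lemmas ----------------- -/

lemma pureProj_conj {d : ℕ} (U : Matrix (Fin d) (Fin d) ℂ) (ψ : Fin d → ℂ) :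
    U * pureProj d ψ * star U = pureProj d (U.mulVec ψ) := by
  have h1 : U * pureProj d ψ = Matrix.of fun i j => (U.mulVec ψ) i * star (ψ j) := by
    ext i j
    simp only [pureProj, Matrix.mul_apply, Matrix.of_apply, Matrix.mulVec, dotProduct,
      Finset.sum_mul]
    exact Finset.sum_congr rfl fun k _ => by ring
  rw [h1]
  ext i j
  simp only [pureProj, Matrix.mul_apply, Matrix.of_apply, Matrix.star_apply, Matrix.mulVec,
    dotProduct, star_sum, star_mul', Finset.mul_sum]
  exact Finset.sum_congr rfl fun k _ => by ring

lemma mulVec_norm {d : ℕ} {U : Matrix (Fin d) (Fin d) ℂ}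
    (hU : U ∈ Matrix.unitaryGroup (Fin d) ℂ) (ψ : Fin d → ℂ) :
    dotProduct (star (U.mulVec ψ)) (U.mulVec ψ) = dotProduct (star ψ) ψ := by
  rw [Matrix.star_mulVec, ← dotProduct_mulVec, Matrix.mulVec_mulVec,
    ← Matrix.star_eq_conjTranspose, hU.1, Matrix.one_mulVec]

lemma exists_unitary_to_basis {d : ℕ} (ψ : Fin d → ℂ)
    (hψ : dotProduct (star ψ) ψ = 1) (k : Fin d) :
    ∃ U ∈ Matrix.unitaryGroup (Fin d) ℂ, U.mulVec ψ = fun i => if i = k then 1 else 0 := by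
  classical
  let ψ' : EuclideanSpace ℂ (Fin d) := (WithLp.equiv 2 (Fin d → ℂ)).symm ψ
  have hψ'app : ∀ i, ψ' i = ψ i := fun i => rfl
  have hinner : ∀ (x y : EuclideanSpace ℂ (Fin d)),
      (inner ℂ x y : ℂ) = ∑ i, (starRingEnd ℂ) (x i) * y i := by
    intro x y; rw [PiLp.inner_apply]
    exact Finset.sum_congr rfl fun i _ => by simp only [RCLike.inner_apply]; ring
  have hψn : (inner ℂ ψ' ψ' : ℂ) = 1 := by
    rw [hinner]
    simpa [dotProduct, Pi.star_apply, RCLike.star_def, hψ'app] using hψ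
  have horth : Orthonormal ℂ (({k} : Set (Fin d)).restrict (fun _ : Fin d => ψ')) := by
    rw [orthonormal_iff_ite]
    rintro ⟨i, hi⟩ ⟨j, hj⟩
    simp only [Set.mem_singleton_iff] at hi hj
    subst hi; subst hj
    simpa [Set.restrict] using hψn
  obtain ⟨b, hb⟩ := Orthonormal.exists_orthonormalBasis_extension_of_card_eq
    (𝕜 := ℂ) (finrank_euclideanSpace.trans rfl) horth
  have hbk : b k = ψ' := hb k rfl
  have horthb : ∀ i j, ∑ m, (starRingEnd ℂ) (b i m) * b j m = if i = j then 1 else 0 := by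
    intro i j
    have := (orthonormal_iff_ite.mp b.orthonormal) i j
    rwa [hinner] at this
  refine ⟨Matrix.of fun i j => (starRingEnd ℂ) (b i j), ?_, ?_⟩
  · rw [Matrix.mem_unitaryGroup_iff]
    ext i j
    simp only [Matrix.mul_apply, Matrix.of_apply, Matrix.star_apply, RCLike.star_def,
      Matrix.one_apply, Complex.conj_conj]
    exact horthb i j
  · funext i
    have h3 := horthb i k
    simp only [hbk, hψ'app] at h3
    simp only [Matrix.mulVec, dotProduct, Matrix.of_apply]
    exact h3

lemma trace_pureProj {d : ℕ} (φ : Fin d → ℂ) :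
    Matrix.trace (pureProj d φ) = dotProduct (star φ) φ := by
  simp only [Matrix.trace, Matrix.diag, pureProj, Matrix.of_apply, dotProduct,
    Pi.star_apply]
  exact Finset.sum_congr rfl fun i _ => mul_comm _ _

lemma sum_normSq_eq_one {d : ℕ} {φ : Fin d → ℂ}
    (hφ : dotProduct (star φ) φ = 1) :
    ∑ i, Complex.normSq (φ i) = 1 := by
  have : ((∑ i, Complex.normSq (φ i) : ℝ) : ℂ) = 1 := by
    rw [Complex.ofReal_sum]
    rw [← hφ]
    simp only [dotProduct, Pi.star_apply, RCLike.star_def]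
    exact Finset.sum_congr rfl fun i _ => by
      rw [Complex.normSq_eq_conj_mul_self]
  exact_mod_cast this

lemma trace_pureProj_mul_diag {d : ℕ} (φ : Fin d → ℂ) (eps : Fin d → ℝ) :
    Matrix.trace (pureProj d φ * Matrix.diagonal fun i => (eps i : ℂ))
      = ((∑ i, eps i * Complex.normSq (φ i) : ℝ) : ℂ) := by
  rw [Complex.ofReal_sum]
  simp only [Matrix.trace, Matrix.diag, Matrix.mul_diagonal, pureProj, Matrix.of_apply]
  refine Finset.sum_congr rfl fun i _ => ?_
  rw [RCLike.star_def, Complex.mul_conj]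
  push_cast
  ring

lemma energy_pureProj_diag {d : ℕ} (φ : Fin d → ℂ) (eps : Fin d → ℝ) :
    energy (pureProj d φ) (Matrix.diagonal fun i => (eps i : ℂ))
      = ∑ i, eps i * Complex.normSq (φ i) := by
  rw [energy, trace_pureProj_mul_diag, Complex.ofReal_re]

lemma energy_depol_diag {d : ℕ} (l : ℝ) (φ : Fin d → ℂ) (eps : Fin d → ℝ)
    (hφ : dotProduct (star φ) φ = 1) :
    energy (depol d l (pureProj d φ)) (Matrix.diagonal fun i => (eps i : ℂ))
      = l * (∑ i, eps i * Complex.normSq (φ i)) + (1 - l) / d * ∑ i, eps i := by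
  have htr : Matrix.trace (pureProj d φ) = 1 := by rw [trace_pureProj, hφ]
  rw [energy, depol, htr, one_smul, Matrix.add_mul, Matrix.smul_mul, Matrix.smul_mul,
    Matrix.one_mul, Matrix.trace_add, Matrix.trace_smul, Matrix.trace_smul,
    trace_pureProj_mul_diag, Matrix.trace_diagonal]
  rw [← Complex.ofReal_sum]
  simp only [smul_eq_mul, ← Complex.ofReal_mul, ← Complex.ofReal_add, Complex.ofReal_re]

lemma conj_depol {d : ℕ} (l : ℝ) {U : Matrix (Fin d) (Fin d) ℂ}
    (hU : U ∈ Matrix.unitaryGroup (Fin d) ℂ) (ρ : Matrix (Fin d) (Fin d) ℂ)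
    (htr : Matrix.trace ρ = 1) :
    U * depol d l ρ * star U = depol d l (U * ρ * star U) := by
  have h2 : U * star U = 1 := hU.2
  have htr' : Matrix.trace (U * ρ * star U) = 1 := by
    rw [Matrix.trace_mul_cycle, hU.1, Matrix.one_mul, htr]
  have e1 : U * ((l:ℂ) • ρ) * star U = (l:ℂ) • (U * ρ * star U) := by
    rw [Matrix.mul_smul, Matrix.smul_mul]
  have e2 : U * ((((1 - l) / d : ℝ) : ℂ) • (1 : Matrix (Fin d) (Fin d) ℂ)) * star U
      = (((1 - l) / d : ℝ) : ℂ) • (1 : Matrix (Fin d) (Fin d) ℂ) := by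
    rw [Matrix.mul_smul, Matrix.smul_mul, Matrix.mul_one, h2]
  rw [depol, depol, htr, htr', one_smul, Matrix.mul_add, Matrix.add_mul, e1, e2]

/- ----------------- main theorem ----------------- -/

/-- For the depolarizing channel with `λ < 0` applied to a pure state of mean
energy `E` (Hamiltonian eigenvalues `0 = ε₁ ≤ ... ≤ ε_d = 1`), the output
ergotropy equals `|λ|(1 − E)`. -/
theorem depolarizing_output_ergotropy_neg (d : ℕ) (hd : 0 < d) (l : ℝ)
    (hlb : -1 / ((d:ℝ)^2 - 1) ≤ l) (hl0 : l < 0)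
    (eps : Fin d → ℝ) (hmono : Monotone eps)
    (h0 : eps ⟨0, hd⟩ = 0) (h1 : eps ⟨d - 1, Nat.sub_lt hd Nat.one_pos⟩ = 1)
    (ψ : Fin d → ℂ) (hψ : dotProduct (star ψ) ψ = 1) :
    ergotropy (depol d l (pureProj d ψ)) (Matrix.diagonal fun i => (eps i : ℂ))
      = |l| * (1 - energy (pureProj d ψ) (Matrix.diagonal fun i => (eps i : ℂ))) := by
  classical
  set k : Fin d := ⟨d - 1, Nat.sub_lt hd Nat.one_pos⟩ with hk
  have heps_le : ∀ i, eps i ≤ 1 := by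
    intro i
    have : i ≤ k := by
      rw [Fin.le_def]
      exact Nat.le_sub_one_of_lt i.isLt
    simpa [h1] using hmono this
  set C : ℝ := (1 - l) / d * ∑ i, eps i with hC
  -- value of the energy after an arbitrary unitary
  have hval : ∀ U ∈ Matrix.unitaryGroup (Fin d) ℂ,
      energy (U * depol d l (pureProj d ψ) * star U)
        (Matrix.diagonal fun i => (eps i : ℂ))
      = l * (∑ i, eps i * Complex.normSq ((U.mulVec ψ) i)) + C := by
    intro U hU
    have htr : Matrix.trace (pureProj d ψ) = 1 := by rw [trace_pureProj, hψ]
    rw [conj_depol l hU _ htr, pureProj_conj,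
      energy_depol_diag l (U.mulVec ψ) eps (by rw [mulVec_norm hU, hψ])]
  -- each value is at least l + C
  have hfle : ∀ U ∈ Matrix.unitaryGroup (Fin d) ℂ,
      (∑ i, eps i * Complex.normSq ((U.mulVec ψ) i)) ≤ 1 := by
    intro U hU
    have hsum : ∑ i, Complex.normSq ((U.mulVec ψ) i) = 1 :=
      sum_normSq_eq_one (by rw [mulVec_norm hU, hψ])
    calc ∑ i, eps i * Complex.normSq ((U.mulVec ψ) i)
        ≤ ∑ i, 1 * Complex.normSq ((U.mulVec ψ) i) :=
          Finset.sum_le_sum fun i _ =>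
            mul_le_mul_of_nonneg_right (heps_le i) (Complex.normSq_nonneg _)
      _ = 1 := by simpa using hsum
  have hlow : ∀ x ∈ {x | ∃ U ∈ Matrix.unitaryGroup (Fin d) ℂ,
      x = energy (U * depol d l (pureProj d ψ) * star U)
        (Matrix.diagonal fun i => (eps i : ℂ))}, l + C ≤ x := by
    rintro x ⟨U, hU, rfl⟩
    rw [hval U hU]
    have := mul_le_mul_of_nonpos_left (hfle U hU) (le_of_lt hl0)
    simpa using add_le_add_right (by simpa using this) C
  -- the value l + C is attained
  have hmem : (l + C) ∈ {x | ∃ U ∈ Matrix.unitaryGroup (Fin d) ℂ,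
      x = energy (U * depol d l (pureProj d ψ) * star U)
        (Matrix.diagonal fun i => (eps i : ℂ))} := by
    obtain ⟨U, hU, hUψ⟩ := exists_unitary_to_basis ψ hψ k
    refine ⟨U, hU, ?_⟩
    rw [hval U hU, hUψ]
    have : ∑ i, eps i * Complex.normSq (if i = k then (1:ℂ) else 0) = eps k := by
      rw [Finset.sum_eq_single k]
      · simp
      · intro i _ hik; simp [hik]
      · intro h; exact absurd (Finset.mem_univ k) h
    rw [this, h1]
    ring
  have hinf : minEnergy (depol d l (pureProj d ψ)) (Matrix.diagonal fun i => (eps i : ℂ))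
      = l + C := by
    rw [minEnergy]
    exact le_antisymm (csInf_le ⟨l + C, hlow⟩ hmem) (le_csInf ⟨l + C, hmem⟩ hlow)
  have hE : energy (depol d l (pureProj d ψ)) (Matrix.diagonal fun i => (eps i : ℂ))
      = l * energy (pureProj d ψ) (Matrix.diagonal fun i => (eps i : ℂ)) + C := by
    rw [energy_depol_diag l ψ eps hψ, energy_pureProj_diag]
  rw [ergotropy, hinf, hE, abs_of_neg hl0]
  ring
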